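/- For every positive integer k and every γ ∈ [0,1], H̃(γ, 1/k) = (1/k)·[log₂(k+1) − ψ*_{U_k}(kγ)·log₂ e], where U_k is uniform on {0,1,…,k}, ψ_{U_k}(λ) = ln E[e^{λ U_k}] = ln((1/(k+1))·Σ_{i=0}^k e^{iλ}) is its log-moment generating function (natural logarithm), and ψ*_{U_k}(x) = sup_{λ∈ℝ} { λx − ψ_{U_k}(λ) } is its Legendre–Fenchel transform. -/

import Mathlib

/-- Shannon entropy (in bits) of a pmf on `{0,1,…,k}`, with the convention
`0 · log₂ 0 = 0` (automatic since `Real.logb 2 0 = 0`). -/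
noncomputable def shannonEntropy (k : ℕ) (p : ℕ → ℝ) : ℝ :=
  -∑ i ∈ Finset.range (k + 1), p i * Real.logb 2 (p i)

/-- `H̃(γ, 1/k)`: `(1/k)` times the supremum of the entropies of pmfs on `{0,…,k}`
with mean `kγ`. -/
noncomputable def Htilde (k : ℕ) (γ : ℝ) : ℝ :=
  (1 / (k : ℝ)) * sSup { h : ℝ | ∃ p : ℕ → ℝ,
    (∀ i ∈ Finset.range (k + 1), 0 ≤ p i) ∧
    (∑ i ∈ Finset.range (k + 1), p i = 1) ∧
    (∑ i ∈ Finset.range (k + 1), (i : ℝ) * p i = (k : ℝ) * γ) ∧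
    h = shannonEntropy k p }

/-- Log-moment generating function (natural log) of the uniform distribution on `{0,…,k}`. -/
noncomputable def psiU (k : ℕ) (t : ℝ) : ℝ :=
  Real.log ((1 / ((k : ℝ) + 1)) * ∑ i ∈ Finset.range (k + 1), Real.exp ((i : ℝ) * t))

/-- Legendre–Fenchel transform `ψ*` of `psiU k`. -/
noncomputable def psiUStar (k : ℕ) (x : ℝ) : ℝ :=
  sSup { y : ℝ | ∃ t : ℝ, y = t * x - psiU k t }

namespace HtildeAux

noncomputable def Z (k : ℕ) (t : ℝ) : ℝ := ∑ i ∈ Finset.range (k+1), Real.exp ((i:ℝ) * t)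
noncomputable def T (k : ℕ) (t : ℝ) : ℝ := ∑ i ∈ Finset.range (k+1), (i:ℝ) * Real.exp ((i:ℝ) * t)

lemma Z_pos (k : ℕ) (t : ℝ) : 0 < Z k t :=
  Finset.sum_pos (fun _ _ => Real.exp_pos _) ⟨0, Finset.mem_range.2 (Nat.succ_pos k)⟩

lemma one_le_Z (k : ℕ) (t : ℝ) : 1 ≤ Z k t := by
  have h := Finset.single_le_sum (f := fun i : ℕ => Real.exp ((i:ℝ) * t))
    (s := Finset.range (k+1))
    (fun i _ => le_of_lt (Real.exp_pos _)) (Finset.mem_range.2 (Nat.succ_pos k))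
  simpa [Z] using h

lemma T_nonneg (k : ℕ) (t : ℝ) : 0 ≤ T k t :=
  Finset.sum_nonneg fun i _ => by positivity

lemma psiU_eq (k : ℕ) (t : ℝ) : psiU k t = Real.log (Z k t) - Real.log ((k:ℝ)+1) := by
  have h1 : ((k:ℝ)+1) ≠ 0 := by positivity
  have hZ := Z_pos k t
  rw [Z] at hZ
  rw [psiU, one_div, inv_mul_eq_div, Real.log_div (ne_of_gt hZ) h1]
  rfl

lemma gibbs (k : ℕ) (p : ℕ → ℝ) (m t : ℝ)
    (h0 : ∀ i ∈ Finset.range (k+1), 0 ≤ p i)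
    (h1 : ∑ i ∈ Finset.range (k+1), p i = 1)
    (hm : ∑ i ∈ Finset.range (k+1), (i:ℝ) * p i = m) :
    t * m ≤ Real.log (Z k t) + ∑ i ∈ Finset.range (k+1), p i * Real.log (p i) := by
  have hZ := Z_pos k t
  have key : ∀ i ∈ Finset.range (k+1),
      p i * ((i:ℝ) * t) - p i * Real.log (p i) - p i * Real.log (Z k t)
        ≤ Real.exp ((i:ℝ)*t) / Z k t - p i := by
    intro i hi
    rcases eq_or_lt_of_le (h0 i hi) with h|h
    · rw [← h]; simp; positivity
    · have hlog := Real.log_le_sub_one_of_pos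
        (show 0 < Real.exp ((i:ℝ)*t) / (Z k t * p i) by positivity)
      have hexp : Real.log (Real.exp ((i:ℝ)*t) / (Z k t * p i))
          = (i:ℝ)*t - Real.log (Z k t) - Real.log (p i) := by
        rw [Real.log_div (Real.exp_ne_zero _) (by positivity), Real.log_exp,
            Real.log_mul (ne_of_gt hZ) (ne_of_gt h)]
        ring
      rw [hexp] at hlog
      have h2 := mul_le_mul_of_nonneg_left hlog (le_of_lt h)
      have hcancel : p i * (Real.exp ((i:ℝ)*t) / (Z k t * p i) - 1)
          = Real.exp ((i:ℝ)*t) / Z k t - p i := by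
        field_simp
      rw [hcancel] at h2
      nlinarith [h2]
  have hsum := Finset.sum_le_sum key
  rw [Finset.sum_sub_distrib, Finset.sum_sub_distrib, Finset.sum_sub_distrib] at hsum
  have e1 : ∑ i ∈ Finset.range (k+1), p i * ((i:ℝ) * t) = t * m := by
    rw [← hm, Finset.mul_sum]
    exact Finset.sum_congr rfl fun i _ => by ring
  have e2 : ∑ i ∈ Finset.range (k+1), p i * Real.log (Z k t) = Real.log (Z k t) := by
    rw [← Finset.sum_mul, h1, one_mul]
  have e3 : ∑ i ∈ Finset.range (k+1), Real.exp ((i:ℝ)*t) / Z k t = 1 := by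
    rw [← Finset.sum_div]
    exact div_self (ne_of_gt hZ)
  rw [e1, e2, e3, h1] at hsum
  linarith

lemma Z_symm (k : ℕ) (t : ℝ) : Z k t = Real.exp ((k:ℝ)*t) * Z k (-t) := by
  rw [Z, Z, Finset.mul_sum, ← Finset.sum_range_reflect (fun i => Real.exp ((i:ℝ) * t)) (k+1)]
  refine Finset.sum_congr rfl fun j hj => ?_
  have hjk : j ≤ k := Nat.lt_succ_iff.1 (Finset.mem_range.1 hj)
  rw [← Real.exp_add]
  congr 1
  rw [Nat.add_sub_cancel, Nat.cast_sub hjk]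
  ring

lemma ZT_symm (k : ℕ) (t : ℝ) :
    (k:ℝ) * Z k t - T k t = Real.exp ((k:ℝ)*t) * T k (-t) := by
  have lhs : (k:ℝ) * Z k t - T k t
      = ∑ i ∈ Finset.range (k+1), ((k:ℝ) - i) * Real.exp ((i:ℝ) * t) := by
    rw [Z, T, Finset.mul_sum, ← Finset.sum_sub_distrib]
    exact Finset.sum_congr rfl fun i _ => by ring
  rw [lhs, T, Finset.mul_sum,
    ← Finset.sum_range_reflect (fun i => ((k:ℝ) - i) * Real.exp ((i:ℝ) * t)) (k+1)]
  refine Finset.sum_congr rfl fun j hj => ?_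
  have hjk : j ≤ k := Nat.lt_succ_iff.1 (Finset.mem_range.1 hj)
  rw [Nat.add_sub_cancel, Nat.cast_sub hjk]
  have h2 : Real.exp (((k:ℝ) - j) * t) = Real.exp ((k:ℝ)*t) * Real.exp ((j:ℝ) * -t) := by
    rw [← Real.exp_add]; congr 1; ring
  rw [h2]; ring

lemma phi_symm (k : ℕ) (t : ℝ) :
    T k t / Z k t = (k:ℝ) - T k (-t) / Z k (-t) := by
  have h1 := Z_symm k t
  have h2 := ZT_symm k t
  have hZ := Z_pos k t
  have hZ' := Z_pos k (-t)
  have e1 : T k t = (k:ℝ) * Z k t - Real.exp ((k:ℝ)*t) * T k (-t) := by linarith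
  rw [e1, h1]
  field_simp

lemma psiU_symm (k : ℕ) (t : ℝ) : psiU k t = (k:ℝ)*t + psiU k (-t) := by
  rw [psiU_eq, psiU_eq, Z_symm k t,
    Real.log_mul (Real.exp_ne_zero _) (ne_of_gt (Z_pos k (-t))), Real.log_exp]
  ring

lemma T_le (k : ℕ) (s : ℝ) (hs : s ≤ 0) : T k s ≤ (k:ℝ)*((k:ℝ)+1) * Real.exp s := by
  have h : T k s ≤ ∑ _i ∈ Finset.range (k+1), (k:ℝ) * Real.exp s := by
    refine Finset.sum_le_sum fun i hi => ?_
    rcases Nat.eq_zero_or_pos i with h|h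
    · subst h; simp; positivity
    · have hik : (i:ℝ) ≤ k := by
        exact_mod_cast Nat.lt_succ_iff.1 (Finset.mem_range.1 hi)
      have hexp : Real.exp ((i:ℝ) * s) ≤ Real.exp s := by
        apply Real.exp_le_exp.2
        have h1 : (1:ℝ) ≤ i := by exact_mod_cast h
        nlinarith
      have := mul_le_mul hik hexp (le_of_lt (Real.exp_pos _)) (by positivity)
      simpa using this
  calc T k s ≤ ∑ _i ∈ Finset.range (k+1), (k:ℝ) * Real.exp s := h
  _ = (k:ℝ)*((k:ℝ)+1) * Real.exp s := by
      rw [Finset.sum_const, Finset.card_range, nsmul_eq_mul]; push_cast; ring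

lemma phi_le (k : ℕ) (s : ℝ) (hs : s ≤ 0) : T k s / Z k s ≤ (k:ℝ)*((k:ℝ)+1) * Real.exp s :=
  (div_le_self (T_nonneg k s) (one_le_Z k s)).trans (T_le k s hs)

lemma phi_cont (k : ℕ) : Continuous (fun t => T k t / Z k t) := by
  have hT : Continuous (T k) := by
    unfold T
    exact continuous_finset_sum _ fun i _ =>
      continuous_const.mul (Real.continuous_exp.comp (continuous_const.mul continuous_id))
  have hZ : Continuous (Z k) := by
    unfold Z
    exact continuous_finset_sum _ fun i _ =>
      Real.continuous_exp.comp (continuous_const.mul continuous_id)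
  exact hT.div hZ fun t => ne_of_gt (Z_pos k t)

lemma exists_tilt (k : ℕ) (hk : 0 < k) (m : ℝ) (hm0 : 0 < m) (hmk : m < k) :
    ∃ t : ℝ, T k t / Z k t = m := by
  set B : ℝ := (k:ℝ)*((k:ℝ)+1) with hB
  have hk' : (0:ℝ) < k := by exact_mod_cast hk
  have hk1 : (1:ℝ) ≤ (k:ℝ) := Nat.one_le_cast.2 hk
  have hB1 : (1:ℝ) ≤ B := by nlinarith
  have hBpos : 0 < B := by linarith
  set a : ℝ := Real.log (m / B) with ha
  set b : ℝ := -Real.log ((k - m) / B) with hb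
  have ha0 : a ≤ 0 := Real.log_nonpos (div_nonneg hm0.le hBpos.le)
    (by rw [div_le_one hBpos]; nlinarith)
  have hb0 : -b ≤ 0 := by
    rw [hb, neg_neg]
    exact Real.log_nonpos (div_nonneg (by linarith) hBpos.le) (by rw [div_le_one hBpos]; nlinarith)
  have hab : a ≤ b := le_trans ha0 (by linarith)
  have hfa : T k a / Z k a ≤ m := by
    have hthis := phi_le k a ha0
    have hexpa : Real.exp a = m / B := by
      rw [ha, Real.exp_log (div_pos hm0 hBpos)]
    rw [hexpa] at hthis
    calc T k a / Z k a ≤ B * (m / B) := hthis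
    _ = m := by field_simp
  have hfb : m ≤ T k b / Z k b := by
    have h1 := phi_le k (-b) hb0
    have hexpb : Real.exp (-b) = ((k:ℝ) - m)/B := by
      rw [hb, neg_neg, Real.exp_log (div_pos (by linarith) hBpos)]
    rw [hexpb] at h1
    have h2 : T k (-b) / Z k (-b) ≤ k - m := by
      calc T k (-b) / Z k (-b) ≤ B * ((k - m) / B) := h1
      _ = k - m := by field_simp
    have h3 := phi_symm k b
    rw [h3]; linarith
  have := intermediate_value_Icc hab ((phi_cont k).continuousOn)
  obtain ⟨t, _, ht⟩ := this ⟨hfa, hfb⟩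
  exact ⟨t, ht⟩

lemma shannon_eq (k : ℕ) (p : ℕ → ℝ) :
    shannonEntropy k p = -((∑ i ∈ Finset.range (k+1), p i * Real.log (p i)) / Real.log 2) := by
  rw [shannonEntropy, Finset.sum_div]
  congr 1
  exact Finset.sum_congr rfl fun i _ => by rw [Real.logb, mul_div_assoc]

noncomputable def pmix (k : ℕ) (γ : ℝ) : ℕ → ℝ :=
  fun i => if i = 0 then 1 - γ else if i = k then γ else 0

lemma pair_subset (k : ℕ) : ({0, k} : Finset ℕ) ⊆ Finset.range (k+1) := by
  intro x hx
  simp only [Finset.mem_insert, Finset.mem_singleton] at hx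
  rcases hx with h|h <;> simp [h]

lemma pmix_nonneg (k : ℕ) (γ : ℝ) (hγ0 : 0 ≤ γ) (hγ1 : γ ≤ 1) :
    ∀ i ∈ Finset.range (k+1), 0 ≤ pmix k γ i := by
  intro i _
  unfold pmix
  split_ifs <;> linarith

lemma pmix_sum (k : ℕ) (γ : ℝ) (hk : 0 < k) :
    ∑ i ∈ Finset.range (k+1), pmix k γ i = 1 := by
  rw [← Finset.sum_subset (pair_subset k) (fun x _ hnx => ?_)]
  · rw [Finset.sum_pair hk.ne]
    simp [pmix, hk.ne']
  · simp only [Finset.mem_insert, Finset.mem_singleton, not_or] at hnx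
    simp [pmix, hnx.1, hnx.2]

lemma pmix_mean (k : ℕ) (γ : ℝ) (hk : 0 < k) :
    ∑ i ∈ Finset.range (k+1), (i:ℝ) * pmix k γ i = (k:ℝ) * γ := by
  rw [← Finset.sum_subset (pair_subset k) (fun x _ hnx => ?_)]
  · rw [Finset.sum_pair hk.ne]
    simp [pmix, hk.ne']
  · simp only [Finset.mem_insert, Finset.mem_singleton, not_or] at hnx
    simp [pmix, hnx.1, hnx.2]

lemma pmix_ent (k : ℕ) (γ : ℝ) (hk : 0 < k) (hγ : γ = 0 ∨ γ = 1) :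
    shannonEntropy k (pmix k γ) = 0 := by
  rw [shannonEntropy, Finset.sum_eq_zero, neg_zero]
  intro i _
  rcases hγ with h|h <;> subst h <;>
    by_cases h0 : i = 0 <;> by_cases hkk : i = k <;>
    simp [pmix, h0, hkk, hk.ne']

lemma neg_psiU_ge (k : ℕ) (ε : ℝ) (hε : 0 < ε) :
    ∃ s : ℝ, Real.log ((k:ℝ)+1) - ε ≤ -psiU k s := by
  set s := min (Real.log (ε/((k:ℝ)+1))) 0 with hs
  have hs0 : s ≤ 0 := min_le_right _ _
  have hexp : Real.exp s ≤ ε / ((k:ℝ)+1) := by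
    calc Real.exp s ≤ Real.exp (Real.log (ε/((k:ℝ)+1))) := Real.exp_le_exp.2 (min_le_left _ _)
    _ = ε/((k:ℝ)+1) := Real.exp_log (by positivity)
  have hZs : Z k s ≤ 1 + ε := by
    rw [Z, Finset.sum_range_succ' (fun i => Real.exp ((i:ℝ)*s)) k]
    simp only [Nat.cast_zero, zero_mul, Real.exp_zero]
    have hsum : ∑ i ∈ Finset.range k, Real.exp (((i+1:ℕ):ℝ)*s) ≤ ε := by
      have h1 : ∀ i ∈ Finset.range k, Real.exp (((i+1:ℕ):ℝ)*s) ≤ ε/((k:ℝ)+1) := by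
        intro i _
        refine le_trans (Real.exp_le_exp.2 ?_) hexp
        have h2 : (1:ℝ) ≤ ((i+1:ℕ):ℝ) := by
          exact_mod_cast Nat.one_le_iff_ne_zero.2 (Nat.succ_ne_zero i)
        nlinarith
      have hfrac : (k:ℝ)/((k:ℝ)+1) ≤ 1 := by
        rw [div_le_one (by positivity)]; linarith
      calc ∑ i ∈ Finset.range k, Real.exp (((i+1:ℕ):ℝ)*s)
          ≤ ∑ _i ∈ Finset.range k, ε/((k:ℝ)+1) := Finset.sum_le_sum h1
      _ = (k:ℝ) * (ε/((k:ℝ)+1)) := by rw [Finset.sum_const, Finset.card_range, nsmul_eq_mul]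
      _ = ε * ((k:ℝ)/((k:ℝ)+1)) := by ring
      _ ≤ ε * 1 := mul_le_mul_of_nonneg_left hfrac hε.le
      _ = ε := mul_one ε
    linarith
  have hlog : Real.log (Z k s) ≤ ε :=
    le_trans (Real.log_le_sub_one_of_pos (Z_pos k s)) (by linarith)
  exact ⟨s, by rw [psiU_eq]; linarith⟩

end HtildeAux

open HtildeAux

/-- For every positive integer `k` and `γ ∈ [0,1]`,
`H̃(γ, 1/k) = (1/k)·[log₂(k+1) − ψ*_{U_k}(kγ)·log₂ e]`. -/
theorem Htilde_eq_logb_sub_rateFunction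
    (k : ℕ) (hk : 0 < k) (γ : ℝ) (hγ : γ ∈ Set.Icc (0 : ℝ) 1) :
    Htilde k γ =
      (1 / (k : ℝ)) *
        (Real.logb 2 ((k : ℝ) + 1) -
          psiUStar k ((k : ℝ) * γ) * Real.logb 2 (Real.exp 1)) := by
  obtain ⟨hγ0, hγ1⟩ := hγ
  have hk' : (0:ℝ) < k := Nat.cast_pos.2 hk
  have hlog2 : (0:ℝ) < Real.log 2 := Real.log_pos one_lt_two
  simp only [Htilde]
  set ψ : ℝ := psiUStar k ((k:ℝ) * γ) with hψ
  set C : ℝ := (Real.log ((k:ℝ)+1) - ψ) / Real.log 2 with hC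
  set D : Set ℝ := {y : ℝ | ∃ t : ℝ, y = t * ((k:ℝ)*γ) - psiU k t} with hD
  have hψD : ψ = sSup D := by rw [hψ, psiUStar, hD]
  have hDne : D.Nonempty := ⟨0 * ((k:ℝ)*γ) - psiU k 0, 0, rfl⟩
  have hp0 := pmix_nonneg k γ hγ0 hγ1
  have hp1 := pmix_sum k γ hk
  have hpm := pmix_mean k γ hk
  have hgibbs : ∀ (p : ℕ → ℝ), (∀ i ∈ Finset.range (k+1), 0 ≤ p i) →
      (∑ i ∈ Finset.range (k+1), p i = 1) →
      (∑ i ∈ Finset.range (k+1), (i:ℝ) * p i = (k:ℝ)*γ) →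
      ∀ y ∈ D,
        y ≤ Real.log ((k:ℝ)+1) + ∑ i ∈ Finset.range (k+1), p i * Real.log (p i) := by
    rintro p h0 h1 hm y ⟨t, rfl⟩
    have hg := gibbs k p ((k:ℝ)*γ) t h0 h1 hm
    rw [psiU_eq]
    linarith
  have hDbdd : BddAbove D := ⟨_, hgibbs (pmix k γ) hp0 hp1 hpm⟩
  have hψ_le : ∀ (p : ℕ → ℝ), (∀ i ∈ Finset.range (k+1), 0 ≤ p i) →
      (∑ i ∈ Finset.range (k+1), p i = 1) →
      (∑ i ∈ Finset.range (k+1), (i:ℝ) * p i = (k:ℝ)*γ) →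
      ψ ≤ Real.log ((k:ℝ)+1) + ∑ i ∈ Finset.range (k+1), p i * Real.log (p i) :=
    fun p h0 h1 hm => hψD ▸ csSup_le hDne (hgibbs p h0 h1 hm)
  set E : Set ℝ := { h : ℝ | ∃ p : ℕ → ℝ,
    (∀ i ∈ Finset.range (k + 1), 0 ≤ p i) ∧
    (∑ i ∈ Finset.range (k + 1), p i = 1) ∧
    (∑ i ∈ Finset.range (k + 1), (i : ℝ) * p i = (k : ℝ) * γ) ∧
    h = shannonEntropy k p } with hE
  have hEne : E.Nonempty := ⟨shannonEntropy k (pmix k γ), pmix k γ, hp0, hp1, hpm, rfl⟩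
  have hEub : ∀ h ∈ E, h ≤ C := by
    rintro h ⟨p, h0, h1, hm, rfl⟩
    have hst := hψ_le p h0 h1 hm
    rw [shannon_eq, ← neg_div, hC]
    exact (div_le_div_iff_of_pos_right hlog2).2 (by linarith)
  have hEbdd : BddAbove E := ⟨C, hEub⟩
  have hle : sSup E ≤ C := csSup_le hEne hEub
  have hge : C ≤ sSup E := by
    rcases eq_or_lt_of_le hγ0 with hg0 | hg0
    · -- γ = 0
      have hent : shannonEntropy k (pmix k γ) = 0 := pmix_ent k γ hk (Or.inl hg0.symm)
      have h0E : (0:ℝ) ∈ E := ⟨pmix k γ, hp0, hp1, hpm, hent.symm⟩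
      have hψge : Real.log ((k:ℝ)+1) ≤ ψ := by
        apply le_of_forall_sub_le
        intro ε hε
        obtain ⟨s, hs⟩ := neg_psiU_ge k ε hε
        refine le_trans hs (hψD ▸ le_csSup hDbdd ⟨s, ?_⟩)
        rw [← hg0]; ring
      have hC0 : C ≤ 0 := by
        rw [hC, div_le_iff₀ hlog2]; linarith
      exact le_trans hC0 (le_csSup hEbdd h0E)
    rcases eq_or_lt_of_le hγ1 with hg1 | hg1
    · -- γ = 1
      have hent : shannonEntropy k (pmix k γ) = 0 := pmix_ent k γ hk (Or.inr hg1)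
      have h0E : (0:ℝ) ∈ E := ⟨pmix k γ, hp0, hp1, hpm, hent.symm⟩
      have hψge : Real.log ((k:ℝ)+1) ≤ ψ := by
        apply le_of_forall_sub_le
        intro ε hε
        obtain ⟨s, hs⟩ := neg_psiU_ge k ε hε
        refine le_trans hs (hψD ▸ le_csSup hDbdd ⟨-s, ?_⟩)
        rw [psiU_symm k (-s), neg_neg, hg1]
        ring
      have hC0 : C ≤ 0 := by
        rw [hC, div_le_iff₀ hlog2]; linarith
      exact le_trans hC0 (le_csSup hEbdd h0E)
    · -- 0 < γ < 1
      have hm0 : 0 < (k:ℝ)*γ := mul_pos hk' hg0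
      have hmk : (k:ℝ)*γ < k := by nlinarith
      obtain ⟨t, ht⟩ := exists_tilt k hk ((k:ℝ)*γ) hm0 hmk
      have hZ := Z_pos k t
      set q : ℕ → ℝ := fun i => Real.exp ((i:ℝ)*t) / Z k t with hq
      have hq0 : ∀ i ∈ Finset.range (k+1), 0 ≤ q i := fun i _ => by
        rw [hq]; positivity
      have hq1 : ∑ i ∈ Finset.range (k+1), q i = 1 := by
        simp only [hq]
        rw [← Finset.sum_div,
          show (∑ i ∈ Finset.range (k+1), Real.exp ((i:ℝ)*t)) = Z k t from rfl]
        exact div_self (ne_of_gt hZ)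
      have hqm : ∑ i ∈ Finset.range (k+1), (i:ℝ) * q i = (k:ℝ)*γ := by
        simp only [hq]
        calc ∑ i ∈ Finset.range (k+1), (i:ℝ) * (Real.exp ((i:ℝ)*t) / Z k t)
            = (∑ i ∈ Finset.range (k+1), (i:ℝ) * Real.exp ((i:ℝ)*t)) / Z k t := by
              rw [Finset.sum_div]
              exact Finset.sum_congr rfl fun i _ => (mul_div_assoc _ _ _).symm
        _ = T k t / Z k t := rfl
        _ = (k:ℝ)*γ := ht
      have hlogq : ∀ i : ℕ, Real.log (q i) = (i:ℝ)*t - Real.log (Z k t) := by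
        intro i
        rw [hq]
        simp only
        rw [Real.log_div (Real.exp_ne_zero _) (ne_of_gt hZ), Real.log_exp]
      have hsumlog : ∑ i ∈ Finset.range (k+1), q i * Real.log (q i)
          = t * ((k:ℝ)*γ) - Real.log (Z k t) := by
        calc ∑ i ∈ Finset.range (k+1), q i * Real.log (q i)
            = ∑ i ∈ Finset.range (k+1), (t * ((i:ℝ) * q i) - Real.log (Z k t) * q i) := by
              refine Finset.sum_congr rfl fun i _ => ?_
              rw [hlogq i]; ring
        _ = t * (∑ i ∈ Finset.range (k+1), (i:ℝ) * q i)
              - Real.log (Z k t) * (∑ i ∈ Finset.range (k+1), q i) := by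
              rw [Finset.sum_sub_distrib, Finset.mul_sum, Finset.mul_sum]
        _ = t * ((k:ℝ)*γ) - Real.log (Z k t) := by rw [hqm, hq1, mul_one]
      have hvE : shannonEntropy k q ∈ E := ⟨q, hq0, hq1, hqm, rfl⟩
      have hv : shannonEntropy k q = (Real.log (Z k t) - t * ((k:ℝ)*γ)) / Real.log 2 := by
        rw [shannon_eq, hsumlog]; ring
      have hψge : t * ((k:ℝ)*γ) - psiU k t ≤ ψ := hψD ▸ le_csSup hDbdd ⟨t, rfl⟩
      rw [psiU_eq] at hψge
      have hCv : C ≤ shannonEntropy k q := by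
        rw [hv, hC]
        exact (div_le_div_iff_of_pos_right hlog2).2 (by linarith)
      exact le_trans hCv (le_csSup hEbdd hvE)
  have hkey : sSup E = C := le_antisymm hle hge
  rw [hkey, hC]
  congr 1
  rw [Real.logb, Real.logb, Real.log_exp]
  ring
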